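/- Let c₁,…,c_m ∈ ℝ and η > 0. Then the set {n ∈ ℕ : ‖c_j · n^{3/2}‖ < η for all 1 ≤ j ≤ m} is thick. -/

import Mathlib

open Filter

/-- Distance from a real number to the nearest integer. -/
noncomputable def distNearestInt (x : ℝ) : ℝ := |x - round x|

/-- A set of naturals is thick if it contains arbitrarily long blocks of
consecutive integers. -/
def Thick (S : Set ℕ) : Prop := ∀ L : ℕ, ∃ N : ℕ, ∀ j : ℕ, j ≤ L → N + j ∈ S

/-- A set of naturals is syndetic if it has bounded gaps. -/
def Syndetic (S : Set ℕ) : Prop :=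
  ∃ G : ℕ, 0 < G ∧ ∀ a : ℕ, ∃ n ∈ S, a ≤ n ∧ n < a + G

/-- A set is piecewise syndetic if it is the intersection of a thick set and a
syndetic set. -/
def PiecewiseSyndetic (S : Set ℕ) : Prop :=
  ∃ T B : Set ℕ, Thick T ∧ Syndetic B ∧ S = T ∩ B

open Classical in
/-- The number of elements of `E ∩ {1, …, N}`. -/
noncomputable def countIn (E : Set ℕ) (N : ℕ) : ℕ :=
  ((Finset.Icc 1 N).filter (fun n => n ∈ E)).card

/-- `E` has a natural density that exists and is positive. -/
def PosDensity (E : Set ℕ) : Prop :=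
  ∃ d : ℝ, 0 < d ∧
    Tendsto (fun N : ℕ => (countIn E N : ℝ) / (N : ℝ)) atTop (nhds d)

/-- The return-time set `R_u(E) = {n : ∃ m ∈ E, m + u n ∈ E}`. -/
def retSet (u : ℕ → ℤ) (E : Set ℕ) : Set ℕ :=
  {n : ℕ | ∃ m m' : ℕ, m ∈ E ∧ m' ∈ E ∧ (m' : ℤ) = (m : ℤ) + u n}

/-- The return-time set along the floor of a real-valued function. -/
noncomputable def retSetFloor (f : ℝ → ℝ) (E : Set ℕ) : Set ℕ :=
  retSet (fun n => ⌊f (n : ℝ)⌋) E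

/-- The return-time set along the closest integer to a real-valued function. -/
noncomputable def retSetRound (f : ℝ → ℝ) (E : Set ℕ) : Set ℕ :=
  retSet (fun n => round (f (n : ℝ))) E


lemma dni_nonneg (x : ℝ) : 0 ≤ distNearestInt x := abs_nonneg _

lemma dni_le_int (x : ℝ) (n : ℤ) : distNearestInt x ≤ |x - n| := by
  unfold distNearestInt
  rcases eq_or_ne n (round x) with h | h
  · rw [h]
  · have h1 : |x - round x| ≤ 1/2 := abs_sub_round x
    have h2 : (1:ℝ) ≤ |(n:ℝ) - round x| := by
      have hne : n - round x ≠ 0 := sub_ne_zero.mpr h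
      have h0 := Int.one_le_abs hne
      have : (1:ℝ) ≤ |((n - round x : ℤ) : ℝ)| := by exact_mod_cast h0
      push_cast at this
      convert this using 2
    have h3 : |(n:ℝ) - round x| ≤ |(n:ℝ) - x| + |x - round x| := by
      have := abs_add_le ((n:ℝ) - x) (x - round x)
      simpa [sub_add_sub_cancel] using this
    have h4 : |x - (n:ℝ)| = |(n:ℝ) - x| := abs_sub_comm _ _
    linarith

lemma dni_le_abs (x : ℝ) : distNearestInt x ≤ |x| := by simpa using dni_le_int x 0

lemma dni_add_le (x y : ℝ) :
    distNearestInt (x + y) ≤ distNearestInt x + distNearestInt y := by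
  have h := dni_le_int (x + y) (round x + round y)
  push_cast at h
  refine h.trans ?_
  have he : x + y - ((round x : ℝ) + round y) = (x - round x) + (y - round y) := by ring
  rw [he]
  unfold distNearestInt
  exact abs_add_le _ _

lemma dni_neg_le (x : ℝ) : distNearestInt (-x) ≤ distNearestInt x := by
  have h := dni_le_int (-x) (-(round x))
  push_cast at h
  unfold distNearestInt
  refine h.trans (le_of_eq ?_)
  rw [show -x - -(round x : ℝ) = -(x - round x) by ring, abs_neg]

lemma dni_neg (x : ℝ) : distNearestInt (-x) = distNearestInt x :=
  le_antisymm (dni_neg_le x) (by simpa using dni_neg_le (-x))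

lemma dni_sub_le (x y : ℝ) :
    distNearestInt (x - y) ≤ distNearestInt x + distNearestInt y := by
  rw [sub_eq_add_neg]
  exact (dni_add_le x (-y)).trans (by rw [dni_neg])

lemma dni_nat_mul (j : ℕ) (x : ℝ) :
    distNearestInt ((j : ℝ) * x) ≤ (j : ℝ) * distNearestInt x := by
  induction j with
  | zero => simp [distNearestInt]
  | succ n ih =>
      push_cast
      have : ((n : ℝ) + 1) * x = (n : ℝ) * x + x := by ring
      rw [this]
      have := dni_add_le ((n : ℝ) * x) x
      nlinarith [dni_nonneg x]

lemma box_close {K : ℕ} (hK : 0 < K) {x y : ℝ}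
    (h : ⌊Int.fract x * K⌋ = ⌊Int.fract y * K⌋) :
    distNearestInt (x - y) < 1 / K := by
  have hb1 : Int.fract x * K < ⌊Int.fract y * K⌋ + 1 := by
    rw [← h]; exact Int.lt_floor_add_one _
  have hb2 : (⌊Int.fract y * K⌋ : ℝ) ≤ Int.fract x * K := by
    rw [← h]; exact Int.floor_le _
  have hb3 := Int.lt_floor_add_one (Int.fract y * K)
  have hb4 := Int.floor_le (Int.fract y * K)
  have habs : |Int.fract x - Int.fract y| < 1 / K := by
    have hKR : (0:ℝ) < K := by exact_mod_cast hK
    rw [abs_sub_lt_iff]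
    constructor <;> rw [lt_div_iff₀ hKR] <;> nlinarith
  have hle := dni_le_int (x - y) (⌊x⌋ - ⌊y⌋)
  have : x - y - ((⌊x⌋ : ℝ) - (⌊y⌋ : ℝ)) = Int.fract x - Int.fract y := by
    unfold Int.fract; ring
  push_cast at hle
  rw [this] at hle
  exact hle.trans_lt habs

lemma key (m : ℕ) (γ δ : Fin m → ℝ) (K : ℕ) (hK : 0 < K) :
    ∃ t : ℕ, 1 ≤ t ∧ (∀ i, distNearestInt (γ i * (t : ℝ) ^ 3) < 7 / K) ∧
      (∀ i, distNearestInt (δ i * (t : ℝ)) < 1 / K) := by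
  classical
  have hbox : ∀ x : ℝ, ⌊Int.fract x * K⌋.toNat < K := by
    intro x
    have h1 : Int.fract x * K < K := by
      have := Int.fract_lt_one x
      have hKR : (0:ℝ) < K := by exact_mod_cast hK
      nlinarith
    have h2 : ⌊Int.fract x * K⌋ < (K : ℤ) := Int.floor_lt.2 (by exact_mod_cast h1)
    exact (Int.toNat_lt' hK).2 h2
  set C : ℕ → ((Fin m → Fin K) × (Fin m → Fin K)) := fun n =>
    (fun i => ⟨⌊Int.fract (γ i * (n : ℝ) ^ 3) * K⌋.toNat, hbox _⟩,
     fun i => ⟨⌊Int.fract (δ i * (n : ℝ)) * K⌋.toNat, hbox _⟩) with hC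
  obtain ⟨a, ha, b, c0, hc⟩ := Combinatorics.exists_mono_homothetic_copy (Finset.range 39) C
  have hcol : ∀ u : ℕ, u ≤ 38 → C (a * u + b) = C b := by
    intro u hu
    have h1 := hc u (Finset.mem_range.2 (by omega))
    have h2 := hc 0 (Finset.mem_range.2 (by omega))
    simp only [smul_eq_mul, mul_zero, zero_add] at h1 h2
    rw [h1, h2]
  -- cubic part
  have hcube : ∀ i, ∀ u : ℕ, u ≤ 38 →
      distNearestInt (γ i * ((a * u + b : ℕ) : ℝ) ^ 3 - γ i * ((b : ℕ) : ℝ) ^ 3) < 1 / K := by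
    intro i u hu
    have h := congrArg (fun p => (p.1 i).val) (hcol u hu)
    simp only [hC] at h
    have hfl : ⌊Int.fract (γ i * ((a * u + b : ℕ) : ℝ) ^ 3) * K⌋ =
        ⌊Int.fract (γ i * ((b : ℕ) : ℝ) ^ 3) * K⌋ := by
      have n1 : (0:ℤ) ≤ ⌊Int.fract (γ i * ((a * u + b : ℕ) : ℝ) ^ 3) * K⌋ :=
        Int.floor_nonneg.2 (mul_nonneg (Int.fract_nonneg _) (by positivity))
      have n2 : (0:ℤ) ≤ ⌊Int.fract (γ i * ((b : ℕ) : ℝ) ^ 3) * K⌋ :=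
        Int.floor_nonneg.2 (mul_nonneg (Int.fract_nonneg _) (by positivity))
      omega
    exact box_close hK hfl
  have hlin : ∀ i, ∀ u : ℕ, u ≤ 38 →
      distNearestInt (δ i * ((a * u + b : ℕ) : ℝ) - δ i * ((b : ℕ) : ℝ)) < 1 / K := by
    intro i u hu
    have h := congrArg (fun p => (p.2 i).val) (hcol u hu)
    simp only [hC] at h
    have n1 : (0:ℤ) ≤ ⌊Int.fract (δ i * ((a * u + b : ℕ) : ℝ)) * K⌋ :=
      Int.floor_nonneg.2 (mul_nonneg (Int.fract_nonneg _) (by positivity))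
    have n2 : (0:ℤ) ≤ ⌊Int.fract (δ i * ((b : ℕ) : ℝ)) * K⌋ :=
      Int.floor_nonneg.2 (mul_nonneg (Int.fract_nonneg _) (by positivity))
    exact box_close hK (by omega)
  refine ⟨6 * a, by omega, ?_, ?_⟩
  · intro i
    set g : ℕ → ℝ := fun u => γ i * ((a * u + b : ℕ) : ℝ) ^ 3 - γ i * ((b : ℕ) : ℝ) ^ 3 with hg
    have hid : γ i * ((6 * a : ℕ) : ℝ) ^ 3 =
        g 38 - g 37 - g 37 - g 2 + g 36 + g 1 + g 1 := by
      simp only [hg]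
      push_cast
      ring
    rw [hid]
    have d38 := hcube i 38 (by omega)
    have d37 := hcube i 37 (by omega)
    have d36 := hcube i 36 (by omega)
    have d2 := hcube i 2 (by omega)
    have d1 := hcube i 1 (by omega)
    have s1 := dni_sub_le (g 38) (g 37)
    have s2 := dni_sub_le (g 38 - g 37) (g 37)
    have s3 := dni_sub_le (g 38 - g 37 - g 37) (g 2)
    have s4 := dni_add_le (g 38 - g 37 - g 37 - g 2) (g 36)
    have s5 := dni_add_le (g 38 - g 37 - g 37 - g 2 + g 36) (g 1)
    have s6 := dni_add_le (g 38 - g 37 - g 37 - g 2 + g 36 + g 1) (g 1)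
    have : (7:ℝ) / K = 1/K + 1/K + 1/K + 1/K + 1/K + 1/K + 1/K := by ring
    rw [this]
    simp only [hg] at s1 s2 s3 s4 s5 s6 d38 d37 d36 d2 d1
    linarith
  · intro i
    have d6 := hlin i 6 (by omega)
    have : δ i * ((6 * a : ℕ) : ℝ) =
        δ i * ((a * 6 + b : ℕ) : ℝ) - δ i * ((b : ℕ) : ℝ) := by push_cast; ring
    rw [this]
    exact d6

set_option maxHeartbeats 2000000 in
/-- Lemma 2.5: the set {n : ‖c_j n^{3/2}‖ < η for all j} is thick. -/
theorem stmt_10 (m : ℕ) (c : Fin m → ℝ) (η : ℝ) (hη : 0 < η) :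
    Thick {n : ℕ | ∀ j : Fin m,
      distNearestInt (c j * (n : ℝ) ^ ((3 : ℝ) / 2)) < η} := by
  intro L
  classical
  set Creal : ℝ := 1 + ∑ i, |c i| with hCreal
  have hCpos : (1:ℝ) ≤ Creal := by
    have : (0:ℝ) ≤ ∑ i, |c i| := Finset.sum_nonneg fun i _ => abs_nonneg _
    simp only [hCreal]; linarith
  have hCi : ∀ i, |c i| ≤ Creal := by
    intro i
    have := Finset.single_le_sum (f := fun i => |c i|)
      (fun i _ => abs_nonneg _) (Finset.mem_univ i)
    simp only [hCreal]; linarith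
  set T0 : ℕ := max (L + 1) (⌈Creal * (L:ℝ)^2 / η⌉₊ + 1) with hT0
  have hT0L : L < T0 := lt_of_lt_of_le (Nat.lt_succ_self L) (le_max_left _ _)
  have hT0pos : 0 < T0 := by omega
  have hT0e : Creal * (L:ℝ)^2 < η * T0 := by
    have h1 : Creal * (L:ℝ)^2 / η ≤ (⌈Creal * (L:ℝ)^2 / η⌉₊ : ℝ) := Nat.le_ceil _
    have h2 : (⌈Creal * (L:ℝ)^2 / η⌉₊ + 1 : ℕ) ≤ T0 := le_max_right _ _
    have h2' : ((⌈Creal * (L:ℝ)^2 / η⌉₊ : ℝ) + 1) ≤ (T0:ℝ) := by exact_mod_cast h2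
    have h3 : Creal * (L:ℝ)^2 / η < (T0:ℝ) := by linarith
    rw [div_lt_iff₀ hη] at h3
    linarith
  set K : ℕ := ⌈(16 + 2*(L:ℝ)) / η⌉₊ with hKdef
  have hK : 0 < K := Nat.ceil_pos.2 (by positivity)
  have hKR : (0:ℝ) < K := by exact_mod_cast hK
  have hKb : (7 + (L:ℝ)) / K < η / 2 := by
    have h1 : (16 + 2*(L:ℝ)) / η ≤ (K:ℝ) := Nat.le_ceil _
    rw [div_lt_iff₀ hKR]
    have h2 : 16 + 2*(L:ℝ) ≤ η * K := by
      rw [div_le_iff₀ hη] at h1; linarith [mul_comm η (K:ℝ)]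
    linarith
  obtain ⟨t', ht'1, hcube, hlin⟩ :=
    key m (fun i => 8 * c i * (T0:ℝ)^3) (fun i => 3 * c i * (T0:ℝ)) K hK
  set t : ℕ := T0 * t' with ht
  have htT0 : (T0:ℝ) ≤ (t:ℝ) := by
    have : T0 ≤ t := Nat.le_mul_of_pos_right T0 (by omega)
    exact_mod_cast this
  have htpos : (0:ℝ) < (t:ℝ) := lt_of_lt_of_le (by exact_mod_cast hT0pos) htT0
  refine ⟨4 * t^2, ?_⟩
  intro j hj
  simp only [Set.mem_setOf_eq]
  intro i
  set nR : ℝ := ((4 * t^2 + j : ℕ) : ℝ) with hnR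
  have hnn : (0:ℝ) ≤ nR := Nat.cast_nonneg _
  set s : ℝ := Real.sqrt nR with hsdef
  have hs0 : 0 ≤ s := Real.sqrt_nonneg _
  have hs2 : s^2 = 4 * (t:ℝ)^2 + j := by
    rw [hsdef, Real.sq_sqrt hnn, hnR]; push_cast; ring
  have hrpow : nR ^ ((3:ℝ)/2) = s^3 := by
    rw [hsdef, Real.sqrt_eq_rpow]
    rw [← Real.rpow_natCast (nR ^ ((1:ℝ)/2)) 3, ← Real.rpow_mul hnn]
    norm_num
  set tR : ℝ := (t:ℝ) with htR
  set e : ℝ := s^3 - 8*tR^3 - 3*tR*j with he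
  have hslb : 2*tR ≤ s := by nlinarith [sq_nonneg (s - 2*tR), sq_nonneg (s + 2*tR)]
  have hjL : (j:ℝ) ≤ (L:ℝ) := by exact_mod_cast hj
  have hjt : (j:ℝ) ≤ tR := by
    have : (L:ℝ) < (T0:ℝ) := by exact_mod_cast hT0L
    linarith
  have hj0 : (0:ℝ) ≤ (j:ℝ) := Nat.cast_nonneg _
  have hd : (s - 2*tR) * (4*tR) ≤ (j:ℝ) := by nlinarith
  have hefact : e = (s + tR) * (s - 2*tR)^2 := by
    rw [he]; linear_combination (3*tR) * hs2
  have he0 : 0 ≤ e := by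
    rw [hefact]; exact mul_nonneg (by linarith) (sq_nonneg _)
  have h4t : (0:ℝ) < 4*tR := by linarith
  have hdd : s - 2*tR ≤ (j:ℝ)/(4*tR) := by rw [le_div_iff₀ h4t]; linarith
  have hsub0 : (0:ℝ) ≤ s - 2*tR := by linarith
  have hsum : s + tR ≤ 4*tR := by
    have htR1 : (1:ℝ) ≤ tR := by
      have : (1:ℕ) ≤ T0 := hT0pos
      have h1 : (1:ℝ) ≤ (T0:ℝ) := by exact_mod_cast this
      linarith
    have hnR2 : nR = s^2 := (Real.sq_sqrt hnn).symm
    have hnle : nR ≤ (2*tR + (j:ℝ))^2 := by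
      rw [hnR2, hs2]
      nlinarith [mul_nonneg hj0 (by linarith : (0:ℝ) ≤ 4*tR + (j:ℝ) - 1)]
    have hsle : s ≤ 2*tR + (j:ℝ) := by
      rw [hsdef]
      calc Real.sqrt nR ≤ Real.sqrt ((2*tR + (j:ℝ))^2) := Real.sqrt_le_sqrt hnle
        _ = 2*tR + (j:ℝ) := Real.sqrt_sq (by linarith)
    linarith
  have heub : e ≤ (j:ℝ)^2/(4*tR) := by
    have hsq : (s - 2*tR)^2 ≤ ((j:ℝ)/(4*tR))^2 := pow_le_pow_left₀ hsub0 hdd 2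
    have h1 : e ≤ (4*tR) * ((j:ℝ)/(4*tR))^2 := by
      rw [hefact]
      exact mul_le_mul hsum hsq (sq_nonneg _) (by linarith)
    have h2 : (4*tR) * ((j:ℝ)/(4*tR))^2 = (j:ℝ)^2/(4*tR) := by
      field_simp
    linarith
  have hT0R : (0:ℝ) < (T0:ℝ) := by exact_mod_cast hT0pos
  have e1 : (j:ℝ)^2/(4*tR) ≤ (L:ℝ)^2/(4*(T0:ℝ)) := by
    gcongr
  have hce : Creal * e < η/4 := by
    have hA : Creal * e ≤ Creal * ((L:ℝ)^2/(4*(T0:ℝ))) := by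
      apply mul_le_mul_of_nonneg_left (by linarith) (by linarith)
    have hB : Creal * ((L:ℝ)^2/(4*(T0:ℝ))) < η/4 := by
      rw [show Creal * ((L:ℝ)^2/(4*(T0:ℝ))) = (Creal*(L:ℝ)^2)/(4*(T0:ℝ)) by ring]
      rw [div_lt_iff₀ (by positivity)]
      nlinarith
    linarith
  have hsplit : c i * nR ^ ((3:ℝ)/2) = (8*(c i)*tR^3 + (3*(c i)*tR) * j) + c i * e := by
    rw [hrpow, he]; ring
  rw [hsplit]
  have A1 : distNearestInt (8*(c i)*tR^3) < 7/K := by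
    have h := hcube i
    have heq : (8*(c i)*(T0:ℝ)^3) * (t':ℝ)^3 = 8*(c i)*tR^3 := by
      rw [htR, ht]; push_cast; ring
    rwa [heq] at h
  have A2 : distNearestInt (3*(c i)*tR) < 1/K := by
    have h := hlin i
    have heq : (3*(c i)*(T0:ℝ)) * (t':ℝ) = 3*(c i)*tR := by
      rw [htR, ht]; push_cast; ring
    rwa [heq] at h
  have A3 : distNearestInt ((3*(c i)*tR) * j) ≤ (L:ℝ) * (1/K) := by
    calc distNearestInt ((3*(c i)*tR) * j) = distNearestInt ((j:ℝ) * (3*(c i)*tR)) := by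
          rw [mul_comm]
      _ ≤ (j:ℝ) * distNearestInt (3*(c i)*tR) := dni_nat_mul _ _
      _ ≤ (L:ℝ) * (1/K) := by
          apply mul_le_mul hjL (le_of_lt A2) (dni_nonneg _) (by linarith)
  have A4 : distNearestInt (c i * e) ≤ Creal * e := by
    refine (dni_le_abs _).trans ?_
    rw [abs_mul, abs_of_nonneg he0]
    exact mul_le_mul_of_nonneg_right (hCi i) he0
  have B1 := dni_add_le (8*(c i)*tR^3 + (3*(c i)*tR) * j) (c i * e)
  have B2 := dni_add_le (8*(c i)*tR^3) ((3*(c i)*tR) * j)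
  have hLK : 7/(K:ℝ) + (L:ℝ)*(1/K) < η/2 := by
    have : 7/(K:ℝ) + (L:ℝ)*(1/K) = (7 + (L:ℝ))/K := by field_simp
    rw [this]; exact hKb
  have final : distNearestInt (8*(c i)*tR^3 + (3*(c i)*tR) * j + c i * e) < η := by
    have step1 : distNearestInt (8*(c i)*tR^3 + (3*(c i)*tR) * j + c i * e) ≤
        distNearestInt (8*(c i)*tR^3) + distNearestInt ((3*(c i)*tR) * j) +
          distNearestInt (c i * e) := by linarith
    have step2 : distNearestInt (8*(c i)*tR^3) + distNearestInt ((3*(c i)*tR) * j) +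
        distNearestInt (c i * e) < 7/(K:ℝ) + (L:ℝ)*(1/K) + Creal * e := by
      exact add_lt_add_of_lt_of_le (add_lt_add_of_lt_of_le A1 A3) A4
    linarith
  exact final
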